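/- Let A be a real symmetric n×n matrix with exactly two distinct eigenvalues λ₁ (with multiplicity n-1) and λ₂, both of the same sign. Then there exist a nonzero real r and an invertible equiangular matrix S with some parameter α ∈ (-1/(n-1), 1) such that A = r·S·Sᵀ. -/

import Mathlib

open Matrix Polynomial

noncomputable def Gmat (n : ℕ) (α : ℝ) : Matrix (Fin n) (Fin n) ℝ :=
  (1 - α) • (1 : Matrix (Fin n) (Fin n) ℝ) + α • (Matrix.of fun _ _ => (1 : ℝ))

lemma charpoly_conj' {m : Type*} [Fintype m] [DecidableEq m] {R : Type*} [CommRing R]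
    (U A B : Matrix m m R) (hUB : U * B = 1) :
    (U * A * B).charpoly = A.charpoly := by
  let f : Matrix m m R →+* Matrix m m R[X] := (C : R →+* R[X]).mapMatrix
  have hscal : ∀ M : Matrix m m R[X], M * Matrix.scalar m (X : R[X]) = Matrix.scalar m X * M := by
    intro M
    ext i j
    simp [Matrix.scalar, Matrix.mul_diagonal, Matrix.diagonal_mul, mul_comm]
  have hfmul : ∀ M N : Matrix m m R, f (M * N) = f M * f N := fun M N => _root_.map_mul f M N
  have key : charmatrix (U * A * B) = f U * charmatrix A * f B := by
    have h2 : f U * (Matrix.scalar m X) * f B = Matrix.scalar m X := by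
      rw [hscal, mul_assoc, ← hfmul, hUB, _root_.map_one f, mul_one]
    show Matrix.scalar m X - f (U * A * B) = f U * (Matrix.scalar m X - f A) * f B
    rw [hfmul, hfmul, mul_sub, sub_mul, h2]
  have hdet : (f U).det * (f B).det = 1 := by
    rw [← det_mul, ← hfmul, hUB, _root_.map_one f, det_one]
  show (charmatrix (U * A * B)).det = (charmatrix A).det
  rw [key, det_mul, det_mul]
  linear_combination (charmatrix A).det * hdet

lemma charpoly_diag' {m : ℕ} (d : Fin m → ℝ) :
    (Matrix.diagonal d).charpoly = ∏ i, (X - C (d i)) := by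
  rw [Matrix.charpoly_of_upperTriangular _ (Matrix.blockTriangular_diagonal d)]
  simp

lemma vmv_mul {n : ℕ} (a b c d : Fin n → ℝ) :
    vecMulVec a b * vecMulVec c d = (b ⬝ᵥ c) • vecMulVec a d := by
  ext i j
  simp only [Matrix.mul_apply, Matrix.vecMulVec_apply, Matrix.smul_apply, smul_eq_mul,
    dotProduct, Finset.sum_mul]
  exact Finset.sum_congr rfl fun k _ => by ring

lemma vmv_sub_left {n : ℕ} (a b c : Fin n → ℝ) :
    vecMulVec (a - b) c = vecMulVec a c - vecMulVec b c := by
  ext i j; simp [Matrix.vecMulVec_apply, sub_mul]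

lemma vmv_sub_right {n : ℕ} (a b c : Fin n → ℝ) :
    vecMulVec a (b - c) = vecMulVec a b - vecMulVec a c := by
  ext i j; simp [Matrix.vecMulVec_apply, mul_sub]

lemma vmv_transpose {n : ℕ} (a b : Fin n → ℝ) : (vecMulVec a b)ᵀ = vecMulVec b a := by
  ext i j; simp [Matrix.vecMulVec_apply, mul_comm]

lemma house_symm {n : ℕ} (p : Fin n → ℝ) (c : ℝ) :
    ((1 : Matrix (Fin n) (Fin n) ℝ) - c⁻¹ • vecMulVec p p)ᵀ
    = (1 : Matrix (Fin n) (Fin n) ℝ) - c⁻¹ • vecMulVec p p := by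
  rw [transpose_sub, transpose_one, transpose_smul, vmv_transpose]

lemma house_sq {n : ℕ} (p : Fin n → ℝ) (c : ℝ) (hc : c ≠ 0) (hpp : p ⬝ᵥ p = 2*c) :
    ((1 : Matrix (Fin n) (Fin n) ℝ) - c⁻¹ • vecMulVec p p) *
    ((1 : Matrix (Fin n) (Fin n) ℝ) - c⁻¹ • vecMulVec p p) = 1 := by
  rw [mul_sub, sub_mul, sub_mul, mul_one, one_mul, mul_one, Matrix.smul_mul, Matrix.mul_smul,
    vmv_mul, hpp, smul_smul, smul_smul]
  have h2 : c⁻¹ * c⁻¹ * (2 * c) = c⁻¹ + c⁻¹ := by field_simp; ring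
  rw [h2, add_smul]
  abel

lemma house_conj {n : ℕ} (p e u : Fin n → ℝ) (c : ℝ) (hc : c ≠ 0)
    (hpe : p ⬝ᵥ e = c) (hep : e ⬝ᵥ p = c) (hu : u = e - p) :
    ((1 : Matrix (Fin n) (Fin n) ℝ) - c⁻¹ • vecMulVec p p) * vecMulVec e e *
    ((1 : Matrix (Fin n) (Fin n) ℝ) - c⁻¹ • vecMulVec p p) = vecMulVec u u := by
  have h1 : ((1 : Matrix (Fin n) (Fin n) ℝ) - c⁻¹ • vecMulVec p p) * vecMulVec e e
      = vecMulVec u e := by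
    rw [sub_mul, one_mul, Matrix.smul_mul, vmv_mul, hpe, smul_smul, inv_mul_cancel₀ hc,
      one_smul, hu, vmv_sub_left]
  rw [h1, mul_sub, mul_one, Matrix.mul_smul, vmv_mul, hep, smul_smul, inv_mul_cancel₀ hc,
    one_smul, hu, vmv_sub_right]

/-- A symmetric matrix with exactly two distinct eigenvalues of the same
sign, one of multiplicity `n-1`, factors as `r·S·Sᵀ` with `S` an invertible
equiangular matrix. -/
theorem stmt15 (n : ℕ) (hn : 2 ≤ n) (A : Matrix (Fin n) (Fin n) ℝ)
    (hA : A.IsSymm) (lam₁ lam₂ : ℝ) (hne : lam₁ ≠ lam₂)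
    (hsign : lam₁ * lam₂ > 0)
    (hchar : A.charpoly = (X - C lam₁) ^ (n - 1) * (X - C lam₂)) :
    ∃ (r α : ℝ) (S : Matrix (Fin n) (Fin n) ℝ),
      r ≠ 0 ∧ -1 / ((n : ℝ) - 1) < α ∧ α < 1 ∧
      IsUnit S.det ∧ Sᵀ * S = Gmat n α ∧ A = r • (S * Sᵀ) := by
  classical
  -- basic facts about n
  have hn0 : (0:ℝ) < n := by positivity
  have hnne : (n:ℝ) ≠ 0 := ne_of_gt hn0
  have hn1 : (1:ℝ) < n := by exact_mod_cast lt_of_lt_of_le one_lt_two (by exact_mod_cast hn)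
  -- spectral theorem
  have hH : A.IsHermitian := by
    rwa [Matrix.IsHermitian, conjTranspose_eq_transpose_of_trivial]
  set μ := hH.eigenvalues with hμdef
  set U : Matrix (Fin n) (Fin n) ℝ := (hH.eigenvectorUnitary : Matrix (Fin n) (Fin n) ℝ) with hUdef
  have hU1 : U * star U = 1 := by exact_mod_cast hH.eigenvectorUnitary.2.2
  have hU2 : star U * U = 1 := by exact_mod_cast hH.eigenvectorUnitary.2.1
  have hstarU : star U = Uᵀ := by
    rw [star_eq_conjTranspose, conjTranspose_eq_transpose_of_trivial]
  have hspec' : A = U * Matrix.diagonal μ * star U := by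
    have h := hH.spectral_theorem
    rw [Unitary.conjStarAlgAut_apply] at h
    exact h
  have hspec : A = U * Matrix.diagonal μ * Uᵀ := by rw [← hstarU]; exact hspec'

  -- charpoly of A equals that of diagonal μ
  have hcp : (∏ i, (X - C (μ i))) = (X - C lam₁) ^ (n - 1) * (X - C lam₂) := by
    calc ∏ i, (X - C (μ i)) = (Matrix.diagonal μ).charpoly := (charpoly_diag' μ).symm
      _ = (U * Matrix.diagonal μ * star U).charpoly := (charpoly_conj' U _ (star U) hU1).symm
      _ = A.charpoly := (congrArg Matrix.charpoly hspec').symm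
      _ = _ := hchar
  -- extract the multiset of eigenvalues
  have hmset : (Finset.univ.val.map μ : Multiset ℝ) = Multiset.replicate (n-1) lam₁ + {lam₂} := by
    have lhs : (∏ i, (X - C (μ i))) = ((Finset.univ.val.map μ).map fun a => X - C a).prod := by
      simp [Finset.prod, Multiset.map_map]; rfl
    have hroots := congrArg Polynomial.roots hcp
    rw [lhs, Polynomial.roots_multiset_prod_X_sub_C] at hroots
    rw [hroots, Polynomial.roots_mul, Polynomial.roots_pow, Polynomial.roots_X_sub_C,
      Polynomial.roots_X_sub_C]
    · simp [Multiset.replicate, Multiset.nsmul_singleton]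
    · exact mul_ne_zero (pow_ne_zero _ (Polynomial.X_sub_C_ne_zero _))
        (Polynomial.X_sub_C_ne_zero _)
  have hmem : ∀ i, μ i = lam₁ ∨ μ i = lam₂ := by
    intro i
    have : μ i ∈ (Finset.univ.val.map μ : Multiset ℝ) :=
      Multiset.mem_map_of_mem μ (Finset.mem_univ i)
    rw [hmset] at this
    rcases Multiset.mem_add.mp this with h1 | h2
    · exact Or.inl (Multiset.eq_of_mem_replicate h1)
    · exact Or.inr (Multiset.mem_singleton.mp h2)
  have hcount : Multiset.count lam₂ (Finset.univ.val.map μ) = 1 := by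
    rw [hmset]; simp [Multiset.count_replicate, hne]
  have hcard : (Finset.univ.filter (fun i => μ i = lam₂)).card = 1 := by
    rw [Multiset.count_map] at hcount
    rw [Finset.card_def, Finset.filter_val]
    convert hcount using 3
    exact eq_comm
  obtain ⟨i₀, hi₀⟩ := Finset.card_eq_one.mp hcard
  have hμi₀ : μ i₀ = lam₂ := by
    have : i₀ ∈ Finset.univ.filter (fun i => μ i = lam₂) := hi₀ ▸ Finset.mem_singleton_self i₀
    exact (Finset.mem_filter.mp this).2
  have hμi : ∀ i, i ≠ i₀ → μ i = lam₁ := by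
    intro i hi
    rcases hmem i with h1 | h2
    · exact h1
    · exfalso; apply hi
      have : i ∈ Finset.univ.filter (fun j => μ j = lam₂) :=
        Finset.mem_filter.mpr ⟨Finset.mem_univ i, h2⟩
      rw [hi₀] at this; exact Finset.mem_singleton.mp this
  -- numeric data
  set r : ℝ := (((n:ℝ) - 1) * lam₁ + lam₂) / n with hrdef
  set α : ℝ := (lam₂ - lam₁) / ((n:ℝ) * r) with hαdef
  have hrpos : (0:ℝ) < lam₁ / r ∧ (0:ℝ) < lam₂ / r ∧ r ≠ 0 := by
    rcases mul_pos_iff.mp hsign with ⟨h1, h2⟩ | ⟨h1, h2⟩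
    · have hr : 0 < r := by
        rw [hrdef]
        apply div_pos _ hn0
        nlinarith
      exact ⟨div_pos h1 hr, div_pos h2 hr, ne_of_gt hr⟩
    · have hr : r < 0 := by
        rw [hrdef]
        apply div_neg_of_neg_of_pos _ hn0
        nlinarith
      exact ⟨div_pos_of_neg_of_neg h1 hr, div_pos_of_neg_of_neg h2 hr, ne_of_lt hr⟩
  obtain ⟨hl1r, hl2r, hrne⟩ := hrpos
  have hd : lam₂ - lam₁ + lam₁ * (n:ℝ) ≠ 0 := by
    intro h0
    apply hrne
    rw [hrdef]
    rw [_root_.div_eq_zero_iff]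
    left; linarith
  have hα1 : 1 - α = lam₁ / r := by
    rw [hαdef, hrdef]
    field_simp [hd]
    linear_combination (-1 : ℝ) * mul_inv_cancel₀ hd
  have hα2 : lam₂ / r = 1 - α + n * α := by
    rw [hαdef, hrdef]
    field_simp [hd]
    linear_combination (1 : ℝ) * mul_inv_cancel₀ hd
  -- inequalities for α
  have hαlt1 : α < 1 := by nlinarith [hα1, hl1r]
  have hl2r' : (0:ℝ) < 1 - α + (n:ℝ)*α := by rw [← hα2]; exact hl2r
  have hn1' : (0:ℝ) < (n:ℝ) - 1 := by linarith
  have hαgt : -1 / ((n : ℝ) - 1) < α := by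
    rw [div_lt_iff₀ hn1']
    nlinarith [hl2r']
  -- the vectors
  set s : ℝ := (Real.sqrt n)⁻¹ with hsdef
  have hs0 : 0 < s := by
    rw [hsdef]
    exact inv_pos.mpr (Real.sqrt_pos.mpr hn0)
  have hsq : s * s = 1 / n := by
    rw [hsdef, ← mul_inv, Real.mul_self_sqrt (le_of_lt hn0), one_div]
  have hslt1 : s < 1 := by
    rw [hsdef]
    have h1 : 1 < Real.sqrt n := by
      rw [show (1:ℝ) = Real.sqrt 1 by simp]
      exact Real.sqrt_lt_sqrt (by norm_num) hn1
    rw [inv_lt_one_iff₀]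
    right; exact h1
  set c : ℝ := 1 - s with hcdef
  have hc : c ≠ 0 := ne_of_gt (by rw [hcdef]; linarith)
  set e : Fin n → ℝ := fun i => if i = i₀ then 1 else 0 with hedef
  set u : Fin n → ℝ := fun _ => s with hudef
  set p : Fin n → ℝ := fun i => e i - s with hpdef
  have hue : u = e - p := by
    funext i
    simp [hudef, hpdef]
  have hpe : p ⬝ᵥ e = c := by
    have h1 : ∀ i, p i * e i = if i = i₀ then c else 0 := by
      intro i
      by_cases h : i = i₀ <;> simp [hpdef, hedef, hcdef, h]
    rw [dotProduct]
    rw [Finset.sum_congr rfl fun i _ => h1 i, Finset.sum_ite_eq' Finset.univ i₀ fun _ => c]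
    simp
  have hep : e ⬝ᵥ p = c := by
    rw [← hpe, dotProduct, dotProduct]
    exact Finset.sum_congr rfl fun i _ => mul_comm _ _
  have hpp : p ⬝ᵥ p = 2 * c := by
    have h1 : ∀ i, p i * p i = s * s + (if i = i₀ then 1 - 2*s else 0) := by
      intro i
      by_cases h : i = i₀ <;> simp [hpdef, hedef, h] <;> ring
    rw [dotProduct, Finset.sum_congr rfl fun i _ => h1 i, Finset.sum_add_distrib,
      Finset.sum_const, Finset.sum_ite_eq' Finset.univ i₀ fun _ => 1 - 2*s]
    simp only [Finset.mem_univ, if_true, Finset.card_univ, Fintype.card_fin, nsmul_eq_mul]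
    have : (n:ℝ) * (s * s) = 1 := by rw [hsq]; field_simp
    rw [this, hcdef]; ring
  -- the matrices
  set R : Matrix (Fin n) (Fin n) ℝ :=
    (1 : Matrix (Fin n) (Fin n) ℝ) - c⁻¹ • vecMulVec p p with hRdef
  set D : Matrix (Fin n) (Fin n) ℝ :=
    Matrix.diagonal (fun i => Real.sqrt (μ i / r)) with hDdef
  have hμr : ∀ i, 0 < μ i / r := by
    intro i
    by_cases h : i = i₀
    · rw [h, hμi₀]; exact hl2r
    · rw [hμi i h]; exact hl1r
  have hDD : D * D = Matrix.diagonal (fun i => μ i / r) := by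
    rw [hDdef, diagonal_mul_diagonal]
    have h1 : (fun i => Real.sqrt (μ i / r) * Real.sqrt (μ i / r)) = fun i => μ i / r :=
      funext fun i => Real.mul_self_sqrt (le_of_lt (hμr i))
    rw [h1]
  have hdiagE : Matrix.diagonal (fun i => μ i / r)
      = (1 - α) • (1 : Matrix (Fin n) (Fin n) ℝ) + ((n:ℝ) * α) • vecMulVec e e := by
    ext i j
    by_cases h : i = j
    · subst h
      by_cases h2 : i = i₀
      · subst h2
        simp [Matrix.diagonal_apply_eq, Matrix.one_apply_eq, vecMulVec_apply, hedef, hμi₀]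
        rw [hα2]
      · simp [Matrix.diagonal_apply_eq, Matrix.one_apply_eq, vecMulVec_apply, hedef, h2,
          hμi i h2]
        rw [← hα1]
    · have he0 : e i * e j = 0 := by
        by_cases h2 : i = i₀
        · have : j ≠ i₀ := fun hj => h (h2.trans hj.symm)
          simp [hedef, this]
        · simp [hedef, h2]
      simp [Matrix.diagonal_apply_ne _ h, Matrix.one_apply_ne h, vecMulVec_apply, he0]
  have hRR := house_sq p c hc hpp
  have hRsym := house_symm p c
  have hRER := house_conj p e u c hc hpe hep hue
  set S : Matrix (Fin n) (Fin n) ℝ := U * D * R with hSdef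
  have hUtU : Uᵀ * U = 1 := by rw [← hstarU]; exact hU2
  have hUUt : U * Uᵀ = 1 := by rw [← hstarU]; exact hU1
  have hDt : Dᵀ = D := by rw [hDdef, diagonal_transpose]
  have hSt : Sᵀ = R * (D * Uᵀ) := by
    rw [hSdef, transpose_mul, transpose_mul, hDt, hRdef, house_symm, ← hRdef]
  -- Gram identity
  have hGram : Sᵀ * S = Gmat n α := by
    rw [hSt, hSdef]
    have : R * (D * Uᵀ) * (U * D * R) = R * (D * D) * R := by
      rw [Matrix.mul_assoc U D R, Matrix.mul_assoc R (D * Uᵀ) _, Matrix.mul_assoc D Uᵀ _,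
        ← Matrix.mul_assoc Uᵀ U _, hUtU, Matrix.one_mul, ← Matrix.mul_assoc D D R,
        ← Matrix.mul_assoc R (D*D) R]
    rw [this, hDD, hdiagE]
    simp only [Matrix.mul_add, Matrix.add_mul, Matrix.mul_smul, Matrix.smul_mul, Matrix.mul_one]
    rw [hRR, hRER]
    have hss : (n:ℝ) * α * (s * s) = α := by rw [hsq]; field_simp
    ext i j
    by_cases h : i = j
    · subst h
      simp [Gmat, Matrix.one_apply_eq, vecMulVec_apply, hudef]
      linear_combination hss
    · simp [Gmat, Matrix.one_apply_ne h, vecMulVec_apply, hudef]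
      linear_combination hss
  have hSSt : S * Sᵀ = r⁻¹ • A := by
    rw [hSt, hSdef]
    have h2 : U * D * R * (R * (D * Uᵀ)) = U * (D * D) * Uᵀ := by
      rw [Matrix.mul_assoc (U*D) R _, ← Matrix.mul_assoc R R _, hRR, Matrix.one_mul,
        ← Matrix.mul_assoc (U*D) D Uᵀ, Matrix.mul_assoc U D D]
    rw [h2, hDD]
    have h3 : Matrix.diagonal (fun i => μ i / r) = r⁻¹ • Matrix.diagonal μ := by
      ext i j
      by_cases h : i = j
      · subst h; simp [Matrix.diagonal_apply_eq, div_eq_inv_mul]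
      · simp [Matrix.diagonal_apply_ne _ h]
    rw [h3, Matrix.mul_smul, Matrix.smul_mul, hspec]
  have hfact : A = r • (S * Sᵀ) := by
    rw [hSSt, smul_smul, mul_inv_cancel₀ hrne, one_smul]
  have hdet : IsUnit S.det := by
    rw [hSdef, det_mul, det_mul]
    refine ((Matrix.isUnit_det_of_right_inverse hUUt).mul ?_).mul
      (Matrix.isUnit_det_of_right_inverse hRR)
    rw [hDdef, det_diagonal, isUnit_iff_ne_zero]
    exact Finset.prod_ne_zero_iff.mpr fun i _ => Real.sqrt_ne_zero'.mpr (hμr i)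
  exact ⟨r, α, S, hrne, hαgt, hαlt1, hdet, hGram, hfact⟩
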